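/- Suppose AᵀA is positive definite (equivalently, the least-squares problem min_x ½‖Ax − B‖² has a unique solution), and consider the IPG iterates with β = 0, 0 < α < 2/λ₁, and δ = 1, where now K_β = (AᵀA)⁻¹. Then there exists a real number ρ with (λ₁ − λ_d)/(λ₁ + λ_d) ≤ ρ < 1 such that for every iteration t ≥ 0, ‖g(t+1)‖ ≤ λ₁ ‖K(0) − (AᵀA)⁻¹‖_F · ρ^{t+1} · ‖g(t)‖. -/

import Mathlib

open Matrix Finset

/-- Euclidean norm of a vector in `ℝ^d`. -/
noncomputable def enorm {d : ℕ} (v : Fin d → ℝ) : ℝ :=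
  Real.sqrt (∑ i, v i ^ 2)

/-- Frobenius norm of a matrix. -/
noncomputable def frob {n d : ℕ} (M : Matrix (Fin n) (Fin d) ℝ) : ℝ :=
  Real.sqrt (∑ i, ∑ j, M i j ^ 2)

lemma enorm_nonneg' {d : ℕ} (v : Fin d → ℝ) : 0 ≤ _root_.enorm v := Real.sqrt_nonneg _

lemma frob_nonneg' {n d : ℕ} (M : Matrix (Fin n) (Fin d) ℝ) : 0 ≤ frob M := Real.sqrt_nonneg _

lemma enorm_neg' {d : ℕ} (v : Fin d → ℝ) : _root_.enorm (-v) = _root_.enorm v := by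
  simp [_root_.enorm]

lemma enorm_mulVec_le {n d : ℕ} (M : Matrix (Fin n) (Fin d) ℝ) (v : Fin d → ℝ) :
    _root_.enorm (M.mulVec v) ≤ frob M * _root_.enorm v := by
  rw [_root_.enorm, frob, _root_.enorm, ← Real.sqrt_mul (by positivity)]
  apply Real.sqrt_le_sqrt
  rw [Finset.sum_mul]
  apply Finset.sum_le_sum
  intro i _
  have : M.mulVec v i = ∑ j, M i j * v j := by
    simp [Matrix.mulVec, dotProduct]
  rw [this]
  exact Finset.sum_mul_sq_le_sq_mul_sq _ _ _

lemma sum_sq_eq_trace {n d : ℕ} (M : Matrix (Fin n) (Fin d) ℝ) :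
    ∑ i, ∑ j, M i j ^ 2 = (Mᵀ * M).trace := by
  rw [Matrix.trace]
  rw [Finset.sum_comm]
  apply Finset.sum_congr rfl
  intro j _
  simp [Matrix.mul_apply, Matrix.diag, sq]

lemma frob_orth_mul {d m : ℕ} (U : Matrix (Fin d) (Fin d) ℝ) (N : Matrix (Fin d) (Fin m) ℝ)
    (hU : Uᵀ * U = 1) : frob (U * N) = frob N := by
  unfold frob
  rw [sum_sq_eq_trace, sum_sq_eq_trace, Matrix.transpose_mul]
  rw [show Nᵀ * Uᵀ * (U * N) = Nᵀ * (Uᵀ * U) * N by rw [Matrix.mul_assoc Nᵀ Uᵀ, ← Matrix.mul_assoc Uᵀ U, ← Matrix.mul_assoc]]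
  rw [hU, Matrix.mul_one]

lemma frob_diag_mul_le {d m : ℕ} (c : Fin d → ℝ) (N : Matrix (Fin d) (Fin m) ℝ)
    (b : ℝ) (hb : 0 ≤ b) (hc : ∀ i, |c i| ≤ b) :
    frob (Matrix.diagonal c * N) ≤ b * frob N := by
  unfold frob
  rw [← Real.sqrt_sq hb, ← Real.sqrt_mul (by positivity)]
  apply Real.sqrt_le_sqrt
  rw [Finset.mul_sum]
  apply Finset.sum_le_sum
  intro i _
  rw [Finset.mul_sum]
  apply Finset.sum_le_sum
  intro j _
  rw [Matrix.diagonal_mul, mul_pow]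
  have : c i ^ 2 ≤ b ^ 2 := by
    rw [← sq_abs]
    exact pow_le_pow_left₀ (abs_nonneg _) (hc i) 2
  nlinarith [sq_nonneg (N i j)]

lemma orth_conj_pow {d : ℕ} (V M : Matrix (Fin d) (Fin d) ℝ) (hV : Vᵀ * V = 1) (k : ℕ) :
    (V * M * Vᵀ) ^ k = V * M ^ k * Vᵀ := by
  induction k with
  | zero => simp [mul_eq_one_comm.mp hV]
  | succ k ih =>
    rw [pow_succ, ih, pow_succ]
    rw [show V * M ^ k * Vᵀ * (V * M * Vᵀ) = V * M ^ k * (Vᵀ * V) * M * Vᵀ by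
      simp only [Matrix.mul_assoc]]
    rw [hV, Matrix.mul_one, Matrix.mul_assoc V]


/-- Corollary 1 of the paper: superlinear convergence of IPG when
`AᵀA` is positive definite, with `β = 0` and `δ = 1`:
`‖g(t+1)‖ ≤ λ₁ ‖K(0) − (AᵀA)⁻¹‖_F ρ^{t+1} ‖g(t)‖` for some `ρ ∈ [(λ₁−λ_d)/(λ₁+λ_d), 1)`. -/
theorem ipg_superlinear_convergence
    (n d : ℕ) (hd : 0 < d)
    (A : Matrix (Fin n) (Fin d) ℝ) (B : Fin n → ℝ)
    (hPD : (Aᵀ * A).PosDef)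
    (lam : Fin d → ℝ) (V : Matrix (Fin d) (Fin d) ℝ)
    (hV : Vᵀ * V = 1)
    (hdiag : Aᵀ * A = V * Matrix.diagonal lam * Vᵀ)
    (hanti : Antitone lam)
    (α δ : ℝ) (hα0 : 0 < α) (hα : α < 2 / lam ⟨0, hd⟩) (hδ : δ = 1)
    (K : ℕ → Matrix (Fin d) (Fin d) ℝ)
    (hK : ∀ t, K (t + 1) = K t - α • ((Aᵀ * A) * K t - 1))
    (x : ℕ → Fin d → ℝ) (g : ℕ → Fin d → ℝ)
    (hg : ∀ t, g t = Aᵀ.mulVec (A.mulVec (x t) - B))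
    (hx : ∀ t, x (t + 1) = x t - δ • (K (t + 1)).mulVec (g t)) :
    ∃ ρ : ℝ,
      (lam ⟨0, hd⟩ - lam ⟨d - 1, by omega⟩) /
          (lam ⟨0, hd⟩ + lam ⟨d - 1, by omega⟩) ≤ ρ ∧
      ρ < 1 ∧
      ∀ t : ℕ,
        _root_.enorm (g (t + 1)) ≤
          lam ⟨0, hd⟩ * frob (K 0 - (Aᵀ * A)⁻¹) * ρ ^ (t + 1) * _root_.enorm (g t) := by
  subst hδ
  have hVVt : V * Vᵀ = 1 := mul_eq_one_comm.mp hV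
  have hDdiag : Matrix.diagonal lam = Vᵀ * (Aᵀ * A) * V := by
    rw [hdiag]
    simp only [← Matrix.mul_assoc]
    rw [hV, Matrix.one_mul, Matrix.mul_assoc, hV, Matrix.mul_one]
  -- positivity of the eigenvalues
  have hlam : ∀ i, 0 < lam i := by
    intro i
    set y : Fin d → ℝ := fun k => V k i with hy
    have hyne : y ≠ 0 := by
      intro h
      have hz : ∀ j, V j i = 0 := fun j => congrFun h j
      have h1 : (Vᵀ * V) i i = 0 := by
        rw [Matrix.mul_apply]
        simp [Matrix.transpose_apply, hz]
      rw [hV] at h1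
      simp at h1
    have hpos := hPD.dotProduct_mulVec_pos hyne
    have hcomp : star y ⬝ᵥ (Aᵀ * A) *ᵥ y = lam i := by
      have h2 : (Vᵀ * (Aᵀ * A) * V) i i = lam i := by
        rw [← hDdiag]; simp [Matrix.diagonal]
      rw [← h2]
      simp only [dotProduct, Matrix.mulVec, Matrix.mul_apply, Matrix.transpose_apply,
        Pi.star_apply, star_trivial, Finset.sum_mul, Finset.mul_sum]
      rw [Finset.sum_comm]
      apply Finset.sum_congr rfl; intro k _
      apply Finset.sum_congr rfl; intro l _
      apply Finset.sum_congr rfl; intro m _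
      simp only [hy]
      ring
    rw [hcomp] at hpos
    exact hpos
  set l1 := lam ⟨0, hd⟩ with hl1
  set ld := lam ⟨d - 1, by omega⟩ with hld
  have hl1pos : 0 < l1 := hlam _
  have hldpos : 0 < ld := hlam _
  have hbetween : ∀ i, ld ≤ lam i ∧ lam i ≤ l1 := by
    intro i
    constructor
    · exact hanti (by exact Fin.mk_le_mk.mpr (by omega))
    · exact hanti (by exact Fin.mk_le_mk.mpr (by omega))
  have hαl1 : α * l1 < 2 := by
    rw [lt_div_iff₀ hl1pos] at hα
    linarith
  set ρ' : ℝ := max |1 - α * l1| |1 - α * ld| with hρ'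
  set ρ : ℝ := max ρ' ((l1 - ld) / (l1 + ld)) with hρ
  have hρ'lt1 : ρ' < 1 := by
    apply max_lt
    · rw [abs_lt]; constructor <;> nlinarith
    · have h1 : α * ld ≤ α * l1 := by nlinarith [(hbetween ⟨d-1, by omega⟩).2]
      rw [abs_lt]; constructor <;> nlinarith
  have hρlt1 : ρ < 1 := by
    apply max_lt hρ'lt1
    rw [div_lt_one (by linarith)]; linarith
  have hρnn : 0 ≤ ρ := le_trans (abs_nonneg _) (le_trans (le_max_left _ _) (le_max_left _ _))
  have habsle : ∀ i, |1 - α * lam i| ≤ ρ := by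
    intro i
    obtain ⟨h1, h2⟩ := hbetween i
    apply le_trans _ (le_max_left _ _)
    rw [abs_le]
    constructor
    · calc -ρ' ≤ -|1 - α * l1| := neg_le_neg (le_max_left _ _)
        _ ≤ 1 - α * l1 := neg_abs_le _
        _ ≤ 1 - α * lam i := by nlinarith
    · calc 1 - α * lam i ≤ 1 - α * ld := by nlinarith
        _ ≤ |1 - α * ld| := le_abs_self _
        _ ≤ ρ' := le_max_right _ _
  refine ⟨ρ, le_max_right _ _, hρlt1, ?_⟩
  intro t
  -- matrix identities
  have hSinv : (Aᵀ * A) * (Aᵀ * A)⁻¹ = 1 :=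
    Matrix.mul_nonsing_inv _ (isUnit_iff_ne_zero.mpr hPD.det_pos.ne')
  set P : Matrix (Fin d) (Fin d) ℝ := 1 - α • (Aᵀ * A) with hP
  have hE : ∀ s, K (s + 1) - (Aᵀ * A)⁻¹ = P * (K s - (Aᵀ * A)⁻¹) := by
    intro s
    rw [hK s, hP, Matrix.sub_mul, Matrix.one_mul, Matrix.smul_mul,
      Matrix.mul_sub, hSinv, smul_sub]
    abel
  have hEt : ∀ s, K s - (Aᵀ * A)⁻¹ = P ^ s * (K 0 - (Aᵀ * A)⁻¹) := by
    intro s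
    induction s with
    | zero => simp
    | succ s ih => rw [hE s, ih, pow_succ', Matrix.mul_assoc]
  have hgrec : g (t + 1) = ((1 : Matrix (Fin d) (Fin d) ℝ) - (Aᵀ * A) * K (t + 1)).mulVec (g t) := by
    rw [hg (t + 1), hx t, one_smul]
    have harr : A *ᵥ (x t - (K (t + 1)) *ᵥ g t) - B
        = (A *ᵥ x t - B) - A *ᵥ ((K (t + 1)) *ᵥ g t) := by
      rw [Matrix.mulVec_sub]; abel
    rw [harr, Matrix.mulVec_sub, Matrix.sub_mulVec, Matrix.one_mulVec, ← hg t]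
    simp [Matrix.mulVec_mulVec, Matrix.mul_assoc]
  -- eigen decomposition of the iteration matrix
  have hPform : P = V * Matrix.diagonal (fun i => 1 - α * lam i) * Vᵀ := by
    have hQ : (1 : Matrix (Fin d) (Fin d) ℝ) - α • Matrix.diagonal lam
        = Matrix.diagonal (fun i => 1 - α * lam i) := by
      ext i j
      rcases eq_or_ne i j with h | h <;>
        simp [Matrix.diagonal_apply, Matrix.one_apply, h]
    rw [hP, hdiag, ← hQ, Matrix.mul_sub, Matrix.mul_one, Matrix.sub_mul, hVVt,
      Matrix.mul_smul, Matrix.smul_mul]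
  have hkey : (1 : Matrix (Fin d) (Fin d) ℝ) - (Aᵀ * A) * K (t + 1)
      = -(V * Matrix.diagonal (fun i => lam i * (1 - α * lam i) ^ (t + 1))
          * (Vᵀ * (K 0 - (Aᵀ * A)⁻¹))) := by
    have h1 : (1 : Matrix (Fin d) (Fin d) ℝ) - (Aᵀ * A) * K (t + 1)
        = -((Aᵀ * A) * (K (t + 1) - (Aᵀ * A)⁻¹)) := by
      rw [Matrix.mul_sub, hSinv, neg_sub]
    have hSP : (Aᵀ * A) * ((V * Matrix.diagonal (fun i => 1 - α * lam i) * Vᵀ) ^ (t + 1))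
        = V * Matrix.diagonal (fun i => lam i * (1 - α * lam i) ^ (t + 1)) * Vᵀ := by
      rw [orth_conj_pow V _ hV, Matrix.diagonal_pow, hdiag]
      rw [show V * Matrix.diagonal lam * Vᵀ *
            (V * Matrix.diagonal ((fun i => 1 - α * lam i) ^ (t + 1)) * Vᵀ)
          = V * (Matrix.diagonal lam * (Vᵀ * V) *
              Matrix.diagonal ((fun i => 1 - α * lam i) ^ (t + 1))) * Vᵀ by
        simp only [Matrix.mul_assoc], hV, Matrix.mul_one, Matrix.diagonal_mul_diagonal]
      rw [show (fun i => lam i * ((fun i => 1 - α * lam i) ^ (t + 1)) i)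
          = (fun i => lam i * (1 - α * lam i) ^ (t + 1)) from rfl]
    rw [h1, hEt (t + 1), hPform, ← Matrix.mul_assoc, hSP, Matrix.mul_assoc]
  -- the bound
  have hcbound : ∀ i, |lam i * (1 - α * lam i) ^ (t + 1)| ≤ l1 * ρ ^ (t + 1) := by
    intro i
    rw [abs_mul, abs_pow]
    apply mul_le_mul
    · rw [abs_of_pos (hlam i)]; exact (hbetween i).2
    · exact pow_le_pow_left₀ (abs_nonneg _) (habsle i) _
    · positivity
    · exact le_of_lt hl1pos
  calc _root_.enorm (g (t + 1))
      = _root_.enorm ((V * (Matrix.diagonal (fun i => lam i * (1 - α * lam i) ^ (t + 1))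
          * (Vᵀ * (K 0 - (Aᵀ * A)⁻¹)))).mulVec (g t)) := by
        rw [hgrec, hkey, Matrix.neg_mulVec, enorm_neg', Matrix.mul_assoc]
    _ ≤ frob (V * (Matrix.diagonal (fun i => lam i * (1 - α * lam i) ^ (t + 1))
          * (Vᵀ * (K 0 - (Aᵀ * A)⁻¹)))) * _root_.enorm (g t) := enorm_mulVec_le _ _
    _ = frob (Matrix.diagonal (fun i => lam i * (1 - α * lam i) ^ (t + 1))
          * (Vᵀ * (K 0 - (Aᵀ * A)⁻¹))) * _root_.enorm (g t) := by
        rw [frob_orth_mul _ _ hV]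
    _ ≤ (l1 * ρ ^ (t + 1)) * frob (Vᵀ * (K 0 - (Aᵀ * A)⁻¹)) * _root_.enorm (g t) := by
        apply mul_le_mul_of_nonneg_right _ (enorm_nonneg' _)
        exact frob_diag_mul_le _ _ _ (by positivity) hcbound
    _ = (l1 * ρ ^ (t + 1)) * frob (K 0 - (Aᵀ * A)⁻¹) * _root_.enorm (g t) := by
        rw [frob_orth_mul _ _ (by rw [Matrix.transpose_transpose, hVVt])]
    _ = l1 * frob (K 0 - (Aᵀ * A)⁻¹) * ρ ^ (t + 1) * _root_.enorm (g t) := by ring
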